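/- Let 𝔽 be a field, t ∈ 𝔽^{n_1}⊗⋯⊗𝔽^{n_k}, and θ a probability distribution on [k]. Then ρ^θ(t) ≤ Σ_{i=1}^k θ(i)·log₂ n_i − (2/ln 2)·(min_i θ(i))·instab(t)², where ρ^θ is the logarithmic upper support functional and instab(t) is the instability of t. -/

import Mathlib

open scoped BigOperators
open scoped Classical
open scoped ComplexOrder

noncomputable section

namespace CVZ

variable {k : ℕ}

/-- A concrete `k`-tensor over `F` with index types `I i`: the coefficient array
(in the standard bases) of a multilinear map `V₁ × ⋯ × V_k → F` with `dim V_i = |I i|`. -/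
abbrev Tensor (F : Type*) (I : Fin k → Type*) : Type _ := (∀ i, I i) → F

section Basic

variable {F : Type*} [Field F] {I J : Fin k → Type*}
  [∀ i, Fintype (I i)] [∀ i, DecidableEq (I i)]
  [∀ i, Fintype (J i)] [∀ i, DecidableEq (J i)]

/-- Coefficient array of the restriction `f ∘ (A₁, …, A_k)`, where `A_i : W_i → V_i`
is given by the matrix `A i`. -/
def restrictBy (A : ∀ i, Matrix (I i) (J i) F) (t : Tensor F I) : Tensor F J :=
  fun β => ∑ α : ∀ i, I i, (∏ i, A i (α i) (β i)) * t α

/-- `t` restricts to `s`. -/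
def Restricts (t : Tensor F I) (s : Tensor F J) : Prop :=
  ∃ A : ∀ i, Matrix (I i) (J i) F, restrictBy A t = s

/-- A choice of bases of the spaces `V_i`, encoded as a tuple of invertible matrices. -/
def IsBasisTuple (B : ∀ i, Matrix (I i) (I i) F) : Prop := ∀ i, IsUnit (B i)

/-- Support of a tensor (with respect to the standard bases). -/
def supp (t : Tensor F I) : Set (∀ i, I i) := {α | t α ≠ 0}

end Basic

section Entropy

/-- A probability distribution on the finite set `X`. -/
def IsProbDist {X : Type*} [Fintype X] (P : X → ℝ) : Prop :=
  (∀ x, 0 ≤ P x) ∧ ∑ x, P x = 1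

/-- Base-2 Shannon entropy. -/
def H2 {X : Type*} [Fintype X] (P : X → ℝ) : ℝ :=
  ∑ x, -(P x * Real.logb 2 (P x))

variable {I : Fin k → Type*} [∀ i, Fintype (I i)] [∀ i, DecidableEq (I i)]

/-- The `i`-th marginal of a distribution on a product set. -/
def marg (P : (∀ i, I i) → ℝ) (i : Fin k) : I i → ℝ :=
  fun a => ∑ α : ∀ i, I i, if α i = a then P α else 0

/-- `H_θ(P)`, the `θ`-weighted average of the marginal entropies. -/
def Hw (θ : Fin k → ℝ) (P : (∀ i, I i) → ℝ) : ℝ :=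
  ∑ i, θ i * H2 (marg P i)

/-- `H_θ(Φ)`, the supremum of `H_θ(P)` over distributions `P` supported on `Φ`. -/
def HwSet (θ : Fin k → ℝ) (Φ : Set (∀ i, I i)) : ℝ :=
  sSup {h | ∃ P : (∀ i, I i) → ℝ, IsProbDist P ∧ (∀ α, P α ≠ 0 → α ∈ Φ) ∧ h = Hw θ P}

/-- Maximal points of a subset of the product order. -/
def maxPoints [∀ i, LinearOrder (I i)] (Φ : Set (∀ i, I i)) : Set (∀ i, I i) :=
  {α | α ∈ Φ ∧ ∀ β ∈ Φ, ¬ α < β}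

end Entropy

section SuppFunc

variable {F : Type*} [Field F] {I : Fin k → Type*} [∀ i, Fintype (I i)] [∀ i, DecidableEq (I i)]

/-- The logarithmic Strassen upper support functional `ρ^θ`. -/
def rhoUpper (θ : Fin k → ℝ) (t : Tensor F I) : ℝ :=
  sInf {h | ∃ B : ∀ i, Matrix (I i) (I i) F, IsBasisTuple B ∧
    h = HwSet θ (supp (restrictBy B t))}

/-- The Strassen upper support functional `ζ^θ`. -/
def zetaUpper (θ : Fin k → ℝ) (t : Tensor F I) : ℝ :=
  if t = 0 then 0 else (2 : ℝ) ^ rhoUpper θ t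

/-- The logarithmic Strassen lower support functional `ρ_θ`. -/
def rhoLower [∀ i, LinearOrder (I i)] (θ : Fin k → ℝ) (t : Tensor F I) : ℝ :=
  sSup {h | ∃ B : ∀ i, Matrix (I i) (I i) F, IsBasisTuple B ∧
    h = HwSet θ (maxPoints (supp (restrictBy B t)))}

/-- The Strassen lower support functional `ζ_θ`. -/
def zetaLower [∀ i, LinearOrder (I i)] (θ : Fin k → ℝ) (t : Tensor F I) : ℝ :=
  if t = 0 then 0 else (2 : ℝ) ^ rhoLower θ t

/-- The instability of a tensor. -/
def instab (t : Tensor F I) : ℝ :=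
  sSup {ε : ℝ | 0 ≤ ε ∧ ∃ B : ∀ i, Matrix (I i) (I i) F, IsBasisTuple B ∧
    ∃ w : ∀ i, I i → ℝ, (∀ i x, 0 ≤ w i x) ∧ (∀ i, ∃ x, w i x ≠ 0) ∧
      ∀ a ∈ supp (restrictBy B t), ∑ i, w i (a i) ≤
        ∑ i, ((∑ x : I i, w i x) / (Fintype.card (I i) : ℝ) - ε * ⨆ x : I i, w i x)}

end SuppFunc

section Ops

variable {F : Type*} [Field F]

/-- The unit tensor `⟨r⟩`. -/
def unitTensor (F : Type*) [Field F] (k r : ℕ) : Tensor F (fun _ : Fin k => Fin r) :=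
  fun α => if ∀ i j : Fin k, α i = α j then 1 else 0

variable {n m : Fin k → ℕ}

/-- Direct sum of two tensors, with the concatenated (naturally ordered) bases. -/
def dirSumFin (s : Tensor F fun i => Fin (n i)) (t : Tensor F fun i => Fin (m i)) :
    Tensor F fun i => Fin (n i + m i) :=
  fun α =>
    (if h : ∀ i, (α i : ℕ) < n i then s (fun i => ⟨(α i : ℕ), h i⟩) else 0) +
    (if h : ∀ i, n i ≤ (α i : ℕ) then
      t (fun i => ⟨(α i : ℕ) - n i, by have h1 := (α i).isLt; have h2 := h i; omega⟩) else 0)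

/-- Tensor (Kronecker) product of two tensors, with the product bases ordered naturally. -/
def tensMulFin (s : Tensor F fun i => Fin (n i)) (t : Tensor F fun i => Fin (m i)) :
    Tensor F fun i => Fin (n i * m i) :=
  fun α =>
    s (fun i => ⟨(α i : ℕ) / m i, by
      have h := (α i).isLt
      exact Nat.div_lt_of_lt_mul (lt_of_lt_of_le h (Nat.mul_comm (n i) (m i)).le)⟩) *
    t (fun i => ⟨(α i : ℕ) % m i, by
      have h := (α i).isLt
      have hpos : 0 < n i * m i := Nat.lt_of_le_of_lt (Nat.zero_le _) h
      have hm : 0 < m i := by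
        rcases Nat.eq_zero_or_pos (m i) with h0 | h0
        · simp [h0] at hpos
        · exact h0
      exact Nat.mod_lt _ hm⟩)

/-- The `N`-th tensor power of a tensor (grouping the legs into `k` groups). -/
def tpow {I : Fin k → Type*} (t : Tensor F I) (N : ℕ) : Tensor F fun i => Fin N → I i :=
  fun α => ∏ j : Fin N, t fun i => α i j

end Ops

section Subrank

variable {F : Type*} [Field F] {I : Fin k → Type*} [∀ i, Fintype (I i)] [∀ i, DecidableEq (I i)]

/-- The subrank `Q(t)` of a tensor: the largest `r` with `⟨r⟩ ≤ t`. -/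
def Qtensor (t : Tensor F I) : ℕ :=
  sSup {r : ℕ | Restricts t (unitTensor F k r)}

/-- A slice: a tensor of the form `v ⊗ w` with `v` in the `j`-th leg. -/
def IsSlice (s : Tensor F I) : Prop :=
  ∃ (j : Fin k) (v : I j → F) (w : (∀ i : {i : Fin k // i ≠ j}, I i.1) → F),
    ∀ α, s α = v (α j) * w (fun i => α i.1)

/-- The slice rank of a tensor. -/
def sliceRank (t : Tensor F I) : ℕ :=
  sInf {r : ℕ | ∃ c : Fin r → Tensor F I, (∀ a, IsSlice (c a)) ∧ t = ∑ a, c a}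

end Subrank

section Combinatorial

variable {I : Fin k → Type*}

/-- A diagonal: any two distinct elements differ in all coordinates. -/
def IsDiagonal (D : Set (∀ i, I i)) : Prop :=
  ∀ a ∈ D, ∀ b ∈ D, a ≠ b → ∀ i, a i ≠ b i

/-- The `i`-th projection of a set of tuples. -/
def projSet (D : Set (∀ i, I i)) (i : Fin k) : Set (I i) := {x | ∃ a ∈ D, a i = x}

/-- A free diagonal in `Φ`: a diagonal `D` with `D = Φ ∩ (D₁ × ⋯ × D_k)`. -/
def IsFreeDiagonal (D Φ : Set (∀ i, I i)) : Prop :=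
  IsDiagonal D ∧ D = Φ ∩ {a | ∀ i, a i ∈ projSet D i}

/-- The (combinatorial) subrank of a set: the maximal size of a free diagonal. -/
def Qset (Φ : Set (∀ i, I i)) : ℕ :=
  sSup {r : ℕ | ∃ D : Set (∀ i, I i), IsFreeDiagonal D Φ ∧ D.ncard = r}

/-- The `N`-fold coordinatewise power of a set of tuples. -/
def setPow (Φ : Set (∀ i, I i)) (N : ℕ) : Set (∀ i, Fin N → I i) :=
  {α | ∀ j : Fin N, (fun i => α i j) ∈ Φ}

/-- A tight set. -/
def TightSet (Φ : Set (∀ i, I i)) : Prop :=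
  ∃ u : ∀ i, I i → ℤ, (∀ i, Function.Injective (u i)) ∧ ∀ α ∈ Φ, ∑ i, u i (α i) = 0

/-- `Φ` is a combinatorial degeneration of `Ψ` (written `Ψ ⊵ Φ`). -/
def CombDegen (Ψ Φ : Set (∀ i, I i)) : Prop :=
  Φ ⊆ Ψ ∧ ∃ u : ∀ i, I i → ℤ,
    (∀ α ∈ Φ, ∑ i, u i (α i) = 0) ∧ ∀ α ∈ Ψ, α ∉ Φ → 0 < ∑ i, u i (α i)

end Combinatorial

/-- A tight tensor: some basis tuple gives a tight support. -/
def TightTensor {F : Type*} [Field F] {I : Fin k → Type*} [∀ i, Fintype (I i)]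
    [∀ i, DecidableEq (I i)] (t : Tensor F I) : Prop :=
  ∃ B : ∀ i, Matrix (I i) (I i) F, IsBasisTuple B ∧ TightSet (supp (restrictBy B t))

/-- A complete (decreasing) flag of subspaces, `W 0 = ⊤` and `dim (W j) = dim V − j`. -/
def IsCompleteFlag (F : Type*) [Field F] {V : Type*} [AddCommGroup V] [Module F V]
    (W : ℕ → Submodule F V) : Prop :=
  Antitone W ∧ W 0 = ⊤ ∧ ∀ j : ℕ, Module.finrank F (W j) = Module.finrank F V - j

/-- Evaluation of (the multilinear map associated with) `t` at a tuple of vectors. -/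
def eval {F : Type*} [Field F] {I : Fin k → Type*} [∀ i, Fintype (I i)] [∀ i, DecidableEq (I i)]
    (t : Tensor F I) (v : ∀ i, I i → F) : F :=
  ∑ α : ∀ i, I i, (∏ i, v i (α i)) * t α

/-- The support of `t` with respect to a tuple of complete flags. -/
def suppFlag {F : Type*} [Field F] {n : Fin k → ℕ} (t : Tensor F fun i => Fin (n i))
    (W : ∀ i, ℕ → Submodule F (Fin (n i) → F)) : Set (∀ i, Fin (n i)) :=
  {α | ∃ v : ∀ i, Fin (n i) → F, (∀ i, v i ∈ W i (α i : ℕ)) ∧ eval t v ≠ 0}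

section Quantum

variable {I : Fin k → Type*} [∀ i, Fintype (I i)] [∀ i, DecidableEq (I i)]

/-- Von Neumann entropy (base 2) of a Hermitian matrix. -/
def vnEntropy {d : Type*} [Fintype d] [DecidableEq d] (ρ : Matrix d d ℂ) : ℝ :=
  if h : ρ.IsHermitian then ∑ x, -(h.eigenvalues x * Real.logb 2 (h.eigenvalues x)) else 0

/-- The `j`-th marginal (reduced density matrix) of the pure state `|t⟩⟨t| / ⟨t|t⟩`. -/
def margMat (t : Tensor ℂ I) (j : Fin k) : Matrix (I j) (I j) ℂ :=
  fun a b =>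
    (∑ α : ∀ i, I i, ∑ β : ∀ i, I i,
      if α j = a ∧ β j = b ∧ (∀ i, i ≠ j → α i = β i) then t α * star (t β) else 0) /
    ∑ α : ∀ i, I i, t α * star (t α)

/-- The logarithmic lower quantum functional `E_θ` for `θ` a distribution on `[k]`. -/
def Ewq (θ : Fin k → ℝ) (t : Tensor ℂ I) : ℝ :=
  sSup {h | ∃ A : ∀ i, Matrix (I i) (I i) ℂ, IsBasisTuple A ∧
    h = ∑ j, θ j * vnEntropy (margMat (restrictBy A t) j)}

/-- The marginal (reduced density matrix) on the legs in `S` of the pure state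
`|t⟩⟨t| / ⟨t|t⟩`. -/
def margMatSet (t : Tensor ℂ I) (S : Finset (Fin k)) :
    Matrix (∀ i : {x : Fin k // x ∈ S}, I i.1) (∀ i : {x : Fin k // x ∈ S}, I i.1) ℂ :=
  fun a b =>
    (∑ α : ∀ i, I i, ∑ β : ∀ i, I i,
      if (∀ (i : Fin k) (hi : i ∈ S), α i = a ⟨i, hi⟩ ∧ β i = b ⟨i, hi⟩) ∧
         (∀ i, i ∉ S → α i = β i)
      then t α * star (t β) else 0) /
    ∑ α : ∀ i, I i, t α * star (t α)

/-- A probability distribution on the bipartitions `{S, S̄}` of `[k]` (encoded by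
choosing a representative `S` for each bipartition occurring in the support). -/
def IsBipDist (θ : Finset (Fin k) → ℝ) : Prop :=
  (∀ S, 0 ≤ θ S) ∧ (∀ S, θ S ≠ 0 → S.Nonempty ∧ Sᶜ.Nonempty) ∧
    ∑ S : Finset (Fin k), θ S = 1

/-- The logarithmic lower quantum functional `E_θ` for `θ` a distribution on bipartitions. -/
def EwqBip (θ : Finset (Fin k) → ℝ) (t : Tensor ℂ I) : ℝ :=
  sSup {h | ∃ A : ∀ i, Matrix (I i) (I i) ℂ, IsBasisTuple A ∧
    h = ∑ S : Finset (Fin k), θ S * vnEntropy (margMatSet (restrictBy A t) S)}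

/-- The lower quantum functional `F_θ`. -/
def FwqBip (θ : Finset (Fin k) → ℝ) (t : Tensor ℂ I) : ℝ :=
  if t = 0 then 0 else (2 : ℝ) ^ EwqBip θ t

/-- Degeneration: `t` lies in the closure of the `GL × ⋯ × GL`-orbit of `s`. -/
def Degen (s t : Tensor ℂ I) : Prop :=
  t ∈ closure {u : Tensor ℂ I | ∃ A : ∀ i, Matrix (I i) (I i) ℂ,
    IsBasisTuple A ∧ restrictBy A s = u}

end Quantum

/-- Trace norm of a complex matrix: `Tr √(AᴴA)`. -/
def traceNorm {d : Type*} [Fintype d] [DecidableEq d] (A : Matrix d d ℂ) : ℝ :=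
  (((Matrix.posSemidef_conjTranspose_mul_self A).isHermitian.eigenvectorUnitary.1 *
      Matrix.diagonal (((↑) : ℝ → ℂ) ∘ Real.sqrt ∘
        (Matrix.posSemidef_conjTranspose_mul_self A).isHermitian.eigenvalues) *
      (star (Matrix.posSemidef_conjTranspose_mul_self A).isHermitian.eigenvectorUnitary :
        Matrix d d ℂ)).trace).re

/-- `conjIter ρ X j = X_j ⋯ X_2 X_1 ρ X_1 X_2 ⋯ X_j`. -/
def conjIter {d : Type*} [Fintype d] (ρ : Matrix d d ℂ) {n : ℕ}
    (X : Fin n → Matrix d d ℂ) : ℕ → Matrix d d ℂ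
  | 0 => ρ
  | (j + 1) => if h : j < n then X ⟨j, h⟩ * conjIter ρ X j * X ⟨j, h⟩ else conjIter ρ X j

/-- A tricolored sum-free set in `G × G × G`. -/
def IsTriColoredSumFree {G : Type*} [AddCommGroup G] (Γ : Set (G × G × G)) : Prop :=
  (∀ a ∈ Γ, ∀ b ∈ Γ, a ≠ b → a.1 ≠ b.1 ∧ a.2.1 ≠ b.2.1 ∧ a.2.2 ≠ b.2.2) ∧
  ∀ x y z : G, (∃ a ∈ Γ, a.1 = x) → (∃ a ∈ Γ, a.2.1 = y) → (∃ a ∈ Γ, a.2.2 = z) →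
    (x + y + z = 0 ↔ (x, y, z) ∈ Γ)

/-- The maximal size `s₃(G)` of a tricolored sum-free set in `G × G × G`. -/
def s3 (G : Type*) [AddCommGroup G] : ℕ :=
  sSup {r : ℕ | ∃ Γ : Set (G × G × G), IsTriColoredSumFree Γ ∧ Γ.ncard = r}

/-- Binary entropy function (base 2), with the convention `0 · log 0 = 0`. -/
def binH (p : ℝ) : ℝ := -(p * Real.logb 2 p) - (1 - p) * Real.logb 2 (1 - p)

open Filter Topology

section Statement18Aux

/-! ### Auxiliary lemmas for Statement 18 -/

private lemma st18_log_ge_one_sub_inv {x : ℝ} (hx : 0 < x) : 1 - 1/x ≤ Real.log x := by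
  have h := Real.log_le_sub_one_of_pos (x := 1/x) (by positivity)
  rw [Real.log_div one_ne_zero (ne_of_gt hx), Real.log_one] at h
  linarith

private noncomputable def st18g (x : ℝ) : ℝ := (2*x+4)*(x*Real.log x - x + 1) - 3*(x-1)^2

private lemma st18g_hasDeriv {x : ℝ} (hx : 0 < x) :
    HasDerivAt st18g (4*((x+1)*Real.log x - 2*(x-1))) x := by
  have h1 : HasDerivAt (fun x : ℝ => x * Real.log x) (Real.log x + 1) x :=
    Real.hasDerivAt_mul_log (ne_of_gt hx)
  have h2 : HasDerivAt (fun x : ℝ => x*Real.log x - x + 1) (Real.log x + 1 - 1) x :=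
    ((h1.sub (hasDerivAt_id x)).add_const 1)
  have h3 : HasDerivAt (fun x : ℝ => 2*x+4) 2 x := by
    simpa using ((hasDerivAt_id x).const_mul 2).add_const 4
  have h4 := h3.mul h2
  have h5 : HasDerivAt (fun x : ℝ => 3*(x-1)^2) (3*(2*(x-1))) x := by
    have : HasDerivAt (fun x : ℝ => (x-1)^2) (2*(x-1)) x := by
      simpa using ((hasDerivAt_id x).sub_const 1).fun_pow 2
    simpa using this.const_mul 3
  have h6 := h4.sub h5
  exact h6.congr_deriv (by ring)

private noncomputable def st18phi (x : ℝ) : ℝ := (x+1)*Real.log x - 2*(x-1)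

private lemma st18phi_hasDeriv {x : ℝ} (hx : 0 < x) :
    HasDerivAt st18phi (Real.log x + 1/x - 1) x := by
  have h1 : HasDerivAt (fun x : ℝ => (x+1)*Real.log x) ((1:ℝ)*Real.log x + (x+1)*x⁻¹) x :=
    (((hasDerivAt_id x).add_const 1).mul (Real.hasDerivAt_log (ne_of_gt hx)))
  have h2 : HasDerivAt (fun x : ℝ => 2*(x-1)) 2 x := by
    simpa using ((hasDerivAt_id x).sub_const 1).const_mul 2
  have := h1.sub h2
  exact this.congr_deriv (by field_simp; ring)

private lemma st18phi_mono : MonotoneOn st18phi (Set.Ioi (0:ℝ)) := by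
  apply monotoneOn_of_deriv_nonneg (convex_Ioi 0)
  · intro x hx
    exact (st18phi_hasDeriv hx).continuousAt.continuousWithinAt
  · intro x hx
    rw [interior_Ioi] at hx
    exact (st18phi_hasDeriv hx).differentiableAt.differentiableWithinAt
  · intro x hx
    rw [interior_Ioi] at hx
    rw [(st18phi_hasDeriv hx).deriv]
    have := st18_log_ge_one_sub_inv (x := x) hx
    linarith

private lemma st18g_nonneg {x : ℝ} (hx : 0 ≤ x) : 0 ≤ st18g x := by
  have hg1 : st18g 1 = 0 := by simp [st18g]
  have hcont : Continuous st18g := by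
    unfold st18g
    have := Real.continuous_mul_log
    continuity
  have hphi1 : st18phi 1 = 0 := by simp [st18phi]
  rcases le_or_gt 1 x with h1 | h1
  · have hmono : MonotoneOn st18g (Set.Ici 1) := by
      apply monotoneOn_of_deriv_nonneg (convex_Ici 1) hcont.continuousOn
      · intro y hy
        rw [interior_Ici] at hy
        exact (st18g_hasDeriv (lt_trans one_pos hy)).differentiableAt.differentiableWithinAt
      · intro y hy
        rw [interior_Ici] at hy
        rw [(st18g_hasDeriv (lt_trans one_pos hy)).deriv]
        have : st18phi 1 ≤ st18phi y :=
          st18phi_mono (Set.mem_Ioi.2 one_pos) (Set.mem_Ioi.2 (lt_trans one_pos hy)) hy.le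
        rw [hphi1] at this
        unfold st18phi at this
        linarith
    have := hmono (Set.mem_Ici.2 le_rfl) (Set.mem_Ici.2 h1) h1
    rw [hg1] at this; exact this
  · have hanti : AntitoneOn st18g (Set.Icc 0 1) := by
      apply antitoneOn_of_deriv_nonpos (convex_Icc 0 1) hcont.continuousOn
      · intro y hy
        rw [interior_Icc] at hy
        exact (st18g_hasDeriv hy.1).differentiableAt.differentiableWithinAt
      · intro y hy
        rw [interior_Icc] at hy
        rw [(st18g_hasDeriv hy.1).deriv]
        have : st18phi y ≤ st18phi 1 :=
          st18phi_mono (Set.mem_Ioi.2 hy.1) (Set.mem_Ioi.2 one_pos) hy.2.le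
        rw [hphi1] at this
        unfold st18phi at this
        linarith
    have := hanti (Set.mem_Icc.2 ⟨hx, h1.le⟩) (Set.mem_Icc.2 ⟨zero_le_one, le_rfl⟩) h1.le
    rw [hg1] at this; exact this

private lemma st18_pw_pinsker {p q : ℝ} (hp : 0 ≤ p) (hq : 0 < q) :
    3*(p-q)^2/(2*p+4*q) ≤ p * Real.log (p/q) - p + q := by
  have hx : 0 ≤ p/q := by positivity
  have hg := st18g_nonneg hx
  unfold st18g at hg
  set x := p/q with hxdef
  have hpx : p = q * x := by rw [hxdef]; field_simp
  have hden : 0 < 2*p+4*q := by positivity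
  rw [div_le_iff₀ hden]
  have hsq : (p-q)^2 = (x-1)^2*q^2 := by rw [hpx]; ring
  calc 3*(p-q)^2
      ≤ ((2*x+4)*(x*Real.log x - x + 1))*q^2 - 3*(x-1)^2*q^2 + 3*(p-q)^2 := by
        rw [hsq]
        nlinarith [mul_nonneg hg (sq_nonneg q)]
    _ = (p * Real.log x - p + q) * (2*p+4*q) := by
        rw [hsq, hpx]; ring

/-- Discrete Pinsker-type inequality: entropy deficit dominates (twice the square of) the
total variation distance to the uniform distribution. -/
private lemma st18_pinsker {X : Type*} [Fintype X] (P : X → ℝ) (hP : IsProbDist P) :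
    H2 P ≤ Real.logb 2 (Fintype.card X) -
      (2/Real.log 2) * (∑ x, max ((Fintype.card X : ℝ)⁻¹ - P x) 0)^2 := by
  obtain ⟨hP0, hP1⟩ := hP
  have hne : Nonempty X := by
    by_contra h
    rw [not_nonempty_iff] at h
    rw [Finset.sum_eq_zero (fun x _ => (h.false x).elim)] at hP1
    norm_num at hP1
  set n : ℝ := (Fintype.card X : ℝ) with hn
  have hnpos : 0 < n := by
    have : 0 < Fintype.card X := Fintype.card_pos
    rw [hn]; exact_mod_cast this
  set q : ℝ := n⁻¹ with hq
  have hqpos : 0 < q := by positivity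
  have hsumq : ∑ _x : X, q = 1 := by
    rw [Finset.sum_const, Finset.card_univ, nsmul_eq_mul, hq, hn]
    field_simp
  set D : ℝ := ∑ x, P x * Real.log (P x / q) with hD
  have hlog2pos : 0 < Real.log 2 := Real.log_pos (by norm_num)
  have hper : ∀ x : X, P x * Real.log (P x / q) = P x * Real.log (P x) + P x * Real.log n := by
    intro x
    rcases eq_or_lt_of_le (hP0 x) with h0 | h0
    · simp [← h0]
    · rw [Real.log_div (ne_of_gt h0) (ne_of_gt hqpos), hq, Real.log_inv]
      ring
  have hH2log : H2 P * Real.log 2 = ∑ x, -(P x * Real.log (P x)) := by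
    unfold H2
    rw [Finset.sum_mul]
    refine Finset.sum_congr rfl fun x _ => ?_
    rw [Real.logb]
    field_simp
  have hstep1 : D = Real.log n - H2 P * Real.log 2 := by
    rw [hH2log, hD, Finset.sum_congr rfl (fun x _ => hper x), Finset.sum_add_distrib,
      ← Finset.sum_mul, hP1, one_mul, Finset.sum_neg_distrib]
    ring
  set δ : ℝ := ∑ x, max (q - P x) 0 with hδ
  have habs : ∀ x : X, |P x - q| = (P x - q) + 2 * max (q - P x) 0 := by
    intro x
    rcases le_total (P x) q with h | h
    · rw [abs_of_nonpos (by linarith), max_eq_left (by linarith)]; ring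
    · rw [abs_of_nonneg (by linarith), max_eq_right (by linarith)]; ring
  have habs_sum : ∑ x, |P x - q| = 2 * δ := by
    rw [Finset.sum_congr rfl (fun x _ => habs x), Finset.sum_add_distrib,
      Finset.sum_sub_distrib, hP1, hsumq, ← Finset.mul_sum]
    ring
  have hsed : (∑ x, |P x - q|)^2 / (∑ x, (2 * P x + 4 * q)) ≤
      ∑ x, |P x - q|^2 / (2 * P x + 4 * q) :=
    Finset.sq_sum_div_le_sum_sq_div _ _ (fun x _ => by have := hP0 x; positivity)
  have hden_sum : ∑ x : X, (2 * P x + 4 * q) = 6 := by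
    rw [Finset.sum_add_distrib, ← Finset.mul_sum, ← Finset.mul_sum, hP1, hsumq]; norm_num
  have hDT : ∑ x, 3 * (P x - q)^2 / (2 * P x + 4 * q) ≤ D := by
    have hDe : D = ∑ x, (P x * Real.log (P x / q) - P x + q) := by
      rw [Finset.sum_add_distrib, Finset.sum_sub_distrib, hP1, hsumq, hD]
      ring
    rw [hDe]
    exact Finset.sum_le_sum (fun x _ => st18_pw_pinsker (hP0 x) hqpos)
  have hD2 : 2 * δ^2 ≤ D := by
    have h1 : (2*δ)^2 / 6 ≤ ∑ x, |P x - q|^2 / (2 * P x + 4 * q) := by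
      rw [← habs_sum, ← hden_sum]; exact hsed
    have h2 : ∑ x, |P x - q|^2 / (2 * P x + 4 * q) =
        (∑ x, 3 * (P x - q)^2 / (2 * P x + 4 * q))/3 := by
      rw [Finset.sum_div]
      congr 1; ext x
      rw [sq_abs]; ring
    rw [h2] at h1
    nlinarith [hDT]
  show H2 P ≤ Real.logb 2 n - (2/Real.log 2) * δ^2
  rw [Real.logb]
  have hH2 : H2 P = (Real.log n - D)/Real.log 2 := by
    rw [hstep1]; field_simp; ring
  rw [hH2]
  have heq : Real.log n / Real.log 2 - 2/Real.log 2 * δ^2 = (Real.log n - 2*δ^2)/Real.log 2 := by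
    ring
  rw [heq]
  exact (div_le_div_iff_of_pos_right hlog2pos).mpr (by linarith)

section St18Plumb

variable {k : ℕ} {F : Type*} [Field F] {I : Fin k → Type*}
  [∀ i, Fintype (I i)] [∀ i, DecidableEq (I i)]

private lemma st18_restrictBy_zero (A : ∀ i, Matrix (I i) (I i) F) :
    restrictBy A (0 : Tensor F I) = 0 := by
  funext β
  simp [restrictBy]

private lemma st18_restrictBy_one (t : Tensor F I) :
    restrictBy (fun i => (1 : Matrix (I i) (I i) F)) t = t := by
  funext β
  unfold restrictBy
  rw [Finset.sum_eq_single β]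
  · simp [Matrix.one_apply]
  · intro α _ hne
    have : ∃ i, α i ≠ β i := by
      by_contra h; push_neg at h; exact hne (funext h)
    obtain ⟨i, hi⟩ := this
    rw [Finset.prod_eq_zero (Finset.mem_univ i) (by simp [Matrix.one_apply, hi]), zero_mul]
  · intro h; exact absurd (Finset.mem_univ β) h

private lemma st18_restrictBy_comp (A B : ∀ i, Matrix (I i) (I i) F) (t : Tensor F I) :
    restrictBy A (restrictBy B t) = restrictBy (fun i => B i * A i) t := by
  funext γ
  unfold restrictBy
  simp_rw [Finset.mul_sum]
  rw [Finset.sum_comm]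
  refine Finset.sum_congr rfl fun α _ => ?_
  have hmat : ∀ i : Fin k, (B i * A i) (α i) (γ i) = ∑ b : I i, B i (α i) b * A i b (γ i) :=
    fun i => Matrix.mul_apply
  rw [Finset.prod_congr rfl (fun i _ => hmat i), Finset.prod_univ_sum, Fintype.piFinset_univ,
    Finset.sum_mul]
  refine Finset.sum_congr rfl fun β _ => ?_
  rw [Finset.prod_mul_distrib]
  ring

private lemma st18_restrictBy_ne_zero {B : ∀ i, Matrix (I i) (I i) F} (hB : IsBasisTuple B)
    {t : Tensor F I} (ht : t ≠ 0) : restrictBy B t ≠ 0 := by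
  intro h0
  apply ht
  have hinv : ∀ i, B i * (B i)⁻¹ = 1 :=
    fun i => Matrix.mul_nonsing_inv _ ((Matrix.isUnit_iff_isUnit_det _).mp (hB i))
  have hcomp := st18_restrictBy_comp (fun i => (B i)⁻¹) B t
  rw [h0, st18_restrictBy_zero] at hcomp
  have heq : (fun i => B i * (B i)⁻¹) = (fun i => (1 : Matrix (I i) (I i) F)) := by
    funext i; exact hinv i
  rw [heq, st18_restrictBy_one] at hcomp
  exact hcomp.symm

private lemma st18_marg_probDist {P : (∀ i, I i) → ℝ} (hP : IsProbDist P) (i : Fin k) :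
    IsProbDist (marg P i) := by
  obtain ⟨hP0, hP1⟩ := hP
  constructor
  · intro a
    refine Finset.sum_nonneg fun α _ => ?_
    split
    · exact hP0 α
    · exact le_rfl
  · unfold marg
    rw [Finset.sum_comm, ← hP1]
    refine Finset.sum_congr rfl fun α _ => ?_
    rw [Finset.sum_ite_eq]
    simp

private lemma st18_marg_expect (P : (∀ i, I i) → ℝ) (i : Fin k) (w : I i → ℝ) :
    ∑ a : I i, marg P i a * w a = ∑ α : ∀ j, I j, P α * w (α i) := by
  unfold marg
  simp_rw [Finset.sum_mul]
  rw [Finset.sum_comm]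
  refine Finset.sum_congr rfl fun α _ => ?_
  have h : ∀ a : I i, (if α i = a then P α else 0) * w a = if α i = a then P α * w a else 0 :=
    fun a => by split <;> simp
  rw [Finset.sum_congr rfl (fun a _ => h a), Finset.sum_ite_eq]
  simp

private lemma st18_H2_nonneg {X : Type*} [Fintype X] {P : X → ℝ} (hP : IsProbDist P) :
    0 ≤ H2 P := by
  refine Finset.sum_nonneg fun x _ => ?_
  have h1 : P x ≤ 1 := by
    rw [← hP.2]
    exact Finset.single_le_sum (fun y _ => hP.1 y) (Finset.mem_univ x)
  rcases eq_or_lt_of_le (hP.1 x) with h0 | h0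
  · simp [← h0]
  · have : Real.logb 2 (P x) ≤ 0 := Real.logb_nonpos one_lt_two (hP.1 x) h1
    nlinarith

private lemma st18_Hw_nonneg {θ : Fin k → ℝ} (hθ0 : ∀ i, 0 ≤ θ i)
    {P : (∀ i, I i) → ℝ} (hP : IsProbDist P) : 0 ≤ Hw θ P :=
  Finset.sum_nonneg fun i _ =>
    mul_nonneg (hθ0 i) (st18_H2_nonneg (st18_marg_probDist hP i))

private lemma st18_Hw_dirac (θ : Fin k → ℝ) (a₀ : ∀ i, I i) :
    Hw θ (fun α => if α = a₀ then (1:ℝ) else 0) = 0 := by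
  have hmarg : ∀ i, marg (fun α => if α = a₀ then (1:ℝ) else 0) i =
      fun a => if a₀ i = a then (1:ℝ) else 0 := by
    intro i
    funext a
    unfold marg
    have h : ∀ α : ∀ j, I j, (if α i = a then (if α = a₀ then (1:ℝ) else 0) else 0) =
        if α = a₀ then (if α i = a then (1:ℝ) else 0) else 0 := by
      intro α
      by_cases h1 : α = a₀ <;> by_cases h2 : α i = a <;> simp [h1, h2]
    rw [Finset.sum_congr rfl (fun α _ => h α), Finset.sum_ite_eq']
    simp
  have hH2 : ∀ i, H2 (marg (fun α => if α = a₀ then (1:ℝ) else 0) i) = 0 := by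
    intro i
    rw [hmarg i]
    unfold H2
    refine Finset.sum_eq_zero fun a _ => ?_
    by_cases h : a₀ i = a <;> simp [h]
  unfold Hw
  rw [Finset.sum_congr rfl (fun i _ => by rw [hH2 i])]
  simp

private lemma st18_HwSet_nonneg (θ : Fin k → ℝ) (hθ0 : ∀ i, 0 ≤ θ i)
    (Φ : Set (∀ i, I i)) : 0 ≤ HwSet θ Φ := by
  refine Real.sSup_nonneg fun x hx => ?_
  obtain ⟨P, hP, _, rfl⟩ := hx
  exact st18_Hw_nonneg hθ0 hP

/-- The core estimate: any probability distribution supported on a set satisfying the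
instability inequality with parameter `ε` has weighted entropy at most
`∑ θᵢ log nᵢ − (2/ln 2)(min θ) ε²`. -/
private lemma st18_core (θ : Fin k → ℝ) (hθ : IsProbDist θ) (Φ : Set (∀ i, I i))
    (w : ∀ i, I i → ℝ) (hw0 : ∀ i x, 0 ≤ w i x) (hwne : ∀ i, ∃ x, w i x ≠ 0)
    (ε : ℝ) (hε : 0 ≤ ε)
    (hcon : ∀ a ∈ Φ, ∑ i, w i (a i) ≤
      ∑ i, ((∑ x : I i, w i x) / (Fintype.card (I i) : ℝ) - ε * ⨆ x : I i, w i x))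
    (P : (∀ i, I i) → ℝ) (hP : IsProbDist P) (hPsupp : ∀ α, P α ≠ 0 → α ∈ Φ) :
    Hw θ P ≤ ∑ i, θ i * Real.logb 2 (Fintype.card (I i)) -
      (2/Real.log 2) * (⨅ i, θ i) * ε^2 := by
  haveI hne : ∀ i, Nonempty (I i) := fun i => ⟨(hwne i).choose⟩
  haveI hnek : Nonempty (Fin k) := by
    by_contra h
    rw [not_nonempty_iff] at h
    have h2 := hθ.2
    rw [Finset.sum_eq_zero (fun i _ => (h.false i).elim)] at h2
    norm_num at h2
  set M : Fin k → ℝ := fun i => ⨆ x : I i, w i x with hM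
  have hMle : ∀ i (x : I i), w i x ≤ M i :=
    fun i x => le_ciSup (Set.Finite.bddAbove (Set.finite_range _)) x
  have hMpos : ∀ i, 0 < M i := by
    intro i
    obtain ⟨x, hx⟩ := hwne i
    exact lt_of_lt_of_le (lt_of_le_of_ne (hw0 i x) (Ne.symm hx)) (hMle i x)
  set δ : Fin k → ℝ := fun i =>
    ∑ a : I i, max ((Fintype.card (I i) : ℝ)⁻¹ - marg P i a) 0 with hδ
  have hδ0 : ∀ i, 0 ≤ δ i := fun i => Finset.sum_nonneg fun a _ => le_max_right _ _
  set E : Fin k → ℝ := fun i => ∑ a : I i, marg P i a * w i a with hE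
  -- the expected constraint
  have hexp : ∑ i, E i ≤
      ∑ i, ((∑ x : I i, w i x) / (Fintype.card (I i) : ℝ) - ε * M i) := by
    have h1 : ∑ i, E i = ∑ α : ∀ j, I j, P α * ∑ i, w i (α i) := by
      simp only [hE]
      rw [Finset.sum_congr rfl (fun i (_ : i ∈ Finset.univ) => st18_marg_expect P i (w i)),
        Finset.sum_comm]
      refine Finset.sum_congr rfl fun α _ => ?_
      rw [Finset.mul_sum]
    rw [h1]
    have h2 : ∑ α : ∀ j, I j, P α * ∑ i, w i (α i) ≤
        ∑ α : ∀ j, I j, P α *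
          ∑ i, ((∑ x : I i, w i x) / (Fintype.card (I i) : ℝ) - ε * M i) := by
      refine Finset.sum_le_sum fun α _ => ?_
      by_cases h0 : P α = 0
      · simp [h0]
      · exact mul_le_mul_of_nonneg_left (hcon α (hPsupp α h0)) (hP.1 α)
    calc ∑ α : ∀ j, I j, P α * ∑ i, w i (α i) ≤ _ := h2
      _ = _ := by rw [← Finset.sum_mul, hP.2, one_mul]
  -- gap bound per coordinate
  have hgap : ∀ i, (∑ x : I i, w i x) / (Fintype.card (I i) : ℝ) - E i ≤ M i * δ i := by
    intro i
    have h1 : (∑ x : I i, w i x) / (Fintype.card (I i) : ℝ) - E i =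
        ∑ a : I i, ((Fintype.card (I i) : ℝ)⁻¹ - marg P i a) * w i a := by
      simp_rw [sub_mul]
      rw [Finset.sum_sub_distrib, ← Finset.mul_sum]
      simp only [hE]
      rw [inv_mul_eq_div]
    rw [h1]
    have h2 : ∀ a : I i, ((Fintype.card (I i) : ℝ)⁻¹ - marg P i a) * w i a ≤
        max ((Fintype.card (I i) : ℝ)⁻¹ - marg P i a) 0 * M i := by
      intro a
      rcases le_total ((Fintype.card (I i) : ℝ)⁻¹ - marg P i a) 0 with h | h
      · calc ((Fintype.card (I i) : ℝ)⁻¹ - marg P i a) * w i a ≤ (0:ℝ) :=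
              mul_nonpos_of_nonpos_of_nonneg h (hw0 i a)
          _ ≤ _ := mul_nonneg (le_max_right _ _) (hMpos i).le
      · rw [max_eq_left h]
        exact mul_le_mul_of_nonneg_left (hMle i a) h
    calc ∑ a : I i, ((Fintype.card (I i) : ℝ)⁻¹ - marg P i a) * w i a
        ≤ ∑ a : I i, max ((Fintype.card (I i) : ℝ)⁻¹ - marg P i a) 0 * M i :=
          Finset.sum_le_sum fun a _ => h2 a
      _ = M i * δ i := by
          simp only [hδ]
          rw [← Finset.sum_mul, mul_comm]
  -- there is a coordinate with large total variation
  have hkey : ε * ∑ i, M i ≤ ∑ i, M i * δ i := by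
    have h3 : ∑ i, ((∑ x : I i, w i x) / (Fintype.card (I i) : ℝ) - ε * M i) =
        ∑ i, (∑ x : I i, w i x) / (Fintype.card (I i) : ℝ) - ε * ∑ i, M i := by
      rw [Finset.sum_sub_distrib, Finset.mul_sum]
    have h4 : ∑ i, ((∑ x : I i, w i x) / (Fintype.card (I i) : ℝ) - E i) ≤
        ∑ i, M i * δ i := Finset.sum_le_sum fun i _ => hgap i
    rw [Finset.sum_sub_distrib] at h4
    rw [h3] at hexp
    linarith
  obtain ⟨j, _, hj⟩ := Finset.exists_max_image (Finset.univ : Finset (Fin k)) δ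
    Finset.univ_nonempty
  have hMsum : 0 < ∑ i, M i := Finset.sum_pos (fun i _ => hMpos i) Finset.univ_nonempty
  have hεδ : ε ≤ δ j := by
    have h5 : ∑ i, M i * δ i ≤ δ j * ∑ i, M i := by
      rw [Finset.mul_sum]
      refine Finset.sum_le_sum fun i _ => ?_
      rw [mul_comm (δ j) (M i)]
      exact mul_le_mul_of_nonneg_left (hj i (Finset.mem_univ i)) (hMpos i).le
    have := hkey.trans h5
    exact le_of_mul_le_mul_right (by linarith [mul_comm ε (∑ i, M i)]) hMsum
  -- entropy bound via Pinsker
  have hpins : ∀ i, H2 (marg P i) ≤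
      Real.logb 2 (Fintype.card (I i)) - (2/Real.log 2) * δ i ^ 2 := by
    intro i
    have := st18_pinsker (marg P i) (st18_marg_probDist hP i)
    simpa [hδ] using this
  have h5 : Hw θ P ≤ ∑ i, θ i *
      (Real.logb 2 (Fintype.card (I i)) - (2/Real.log 2) * δ i ^ 2) := by
    unfold Hw
    refine Finset.sum_le_sum fun i _ => mul_le_mul_of_nonneg_left (hpins i) (hθ.1 i)
  have h6 : ∑ i, θ i * (Real.logb 2 (Fintype.card (I i)) - (2/Real.log 2) * δ i ^ 2) =
      ∑ i, θ i * Real.logb 2 (Fintype.card (I i)) -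
        (2/Real.log 2) * ∑ i, θ i * δ i ^ 2 := by
    have h : ∀ i : Fin k, θ i * (Real.logb 2 (Fintype.card (I i)) - (2/Real.log 2) * δ i ^ 2)
        = θ i * Real.logb 2 (Fintype.card (I i)) - (2/Real.log 2) * (θ i * δ i ^ 2) :=
      fun i => by ring
    rw [Finset.sum_congr rfl (fun i _ => h i), Finset.sum_sub_distrib, Finset.mul_sum]
  have h7 : (⨅ i, θ i) * ε^2 ≤ ∑ i, θ i * δ i ^ 2 := by
    have hθj : (⨅ i, θ i) ≤ θ j := ciInf_le (Set.Finite.bddBelow (Set.finite_range _)) j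
    have hδj : ε^2 ≤ δ j^2 := pow_le_pow_left₀ hε hεδ 2
    have h8 : (⨅ i, θ i) * ε^2 ≤ θ j * δ j ^2 :=
      mul_le_mul hθj hδj (sq_nonneg ε) (hθ.1 j)
    have h9 : θ j * δ j^2 ≤ ∑ i, θ i * δ i ^ 2 :=
      Finset.single_le_sum (fun i _ => mul_nonneg (hθ.1 i) (sq_nonneg _))
        (Finset.mem_univ j)
    linarith
  have hc2 : (0:ℝ) ≤ 2/Real.log 2 := by
    have := Real.log_pos (by norm_num : (1:ℝ) < 2)
    positivity
  have h10 : (2/Real.log 2) * ((⨅ i, θ i) * ε^2) ≤ (2/Real.log 2) * ∑ i, θ i * δ i ^ 2 :=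
    mul_le_mul_of_nonneg_left h7 hc2
  rw [mul_assoc]
  linarith

end St18Plumb

end Statement18Aux

/-- the instability bound on the upper support functional. -/
theorem statement18 {k : ℕ} {F : Type*} [Field F] {n : Fin k → ℕ}
    (t : Tensor F fun i => Fin (n i)) (θ : Fin k → ℝ) (hθ : IsProbDist θ) :
    rhoUpper θ t ≤ ∑ i, θ i * Real.logb 2 (n i) -
      (2 / Real.log 2) * (⨅ i, θ i) * (instab t) ^ 2 := by
  rcases eq_or_ne t 0 with ht | ht
  · -- degenerate case `t = 0`
    subst ht
    have hsupp0 : ∀ B : ∀ i, Matrix (Fin (n i)) (Fin (n i)) F,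
        supp (restrictBy B (0 : Tensor F fun i => Fin (n i))) = ∅ := by
      intro B
      rw [st18_restrictBy_zero]
      ext α
      simp [supp]
    have hHw0 : HwSet θ (∅ : Set (∀ i, Fin (n i))) = 0 := by
      unfold HwSet
      have hset : {h | ∃ P : (∀ i, Fin (n i)) → ℝ, IsProbDist P ∧
          (∀ α, P α ≠ 0 → α ∈ (∅ : Set (∀ i, Fin (n i)))) ∧ h = Hw θ P} = ∅ := by
        rw [Set.eq_empty_iff_forall_notMem]
        rintro h ⟨P, hP, hsupp, rfl⟩
        have hz : ∀ α ∈ Finset.univ, P α = 0 := fun α _ => by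
          by_contra h0; exact hsupp α h0
        have h1 := hP.2
        rw [Finset.sum_eq_zero hz] at h1
        norm_num at h1
      rw [hset, Real.sSup_empty]
    have hrho : rhoUpper θ (0 : Tensor F fun i => Fin (n i)) = 0 := by
      unfold rhoUpper
      have hset : {h | ∃ B : ∀ i, Matrix (Fin (n i)) (Fin (n i)) F, IsBasisTuple B ∧
          h = HwSet θ (supp (restrictBy B (0 : Tensor F fun i => Fin (n i))))} = {0} := by
        ext h
        simp only [Set.mem_setOf_eq, Set.mem_singleton_iff]
        constructor
        · rintro ⟨B, hB, rfl⟩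
          rw [hsupp0 B, hHw0]
        · rintro rfl
          exact ⟨fun _ => 1, fun i => isUnit_one, by rw [hsupp0, hHw0]⟩
      rw [hset, csInf_singleton]
    have hinstab : instab (0 : Tensor F fun i => Fin (n i)) = 0 := by
      unfold instab
      by_cases hall : ∀ i, 0 < n i
      · apply Real.sSup_of_not_bddAbove
        rintro ⟨b, hb⟩
        have hmem : ∀ ε : ℝ, 0 ≤ ε → ε ∈ {ε : ℝ | 0 ≤ ε ∧
            ∃ B : ∀ i, Matrix (Fin (n i)) (Fin (n i)) F, IsBasisTuple B ∧
            ∃ w : ∀ i, Fin (n i) → ℝ, (∀ i x, 0 ≤ w i x) ∧ (∀ i, ∃ x, w i x ≠ 0) ∧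
              ∀ a ∈ supp (restrictBy B (0 : Tensor F fun i => Fin (n i))), ∑ i, w i (a i) ≤
                ∑ i, ((∑ x : Fin (n i), w i x) / (Fintype.card (Fin (n i)) : ℝ) -
                  ε * ⨆ x : Fin (n i), w i x)} := by
          intro ε hε
          refine ⟨hε, fun _ => 1, fun i => isUnit_one, fun i _ => 1,
            fun i x => zero_le_one, fun i => ⟨⟨0, hall i⟩, one_ne_zero⟩, ?_⟩
          intro a ha
          rw [hsupp0] at ha
          exact absurd ha (Set.notMem_empty a)
        have h1 := hb (hmem (max b 0 + 1) (by positivity))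
        have h2 := le_max_left b 0
        linarith
      · have hset : {ε : ℝ | 0 ≤ ε ∧
            ∃ B : ∀ i, Matrix (Fin (n i)) (Fin (n i)) F, IsBasisTuple B ∧
            ∃ w : ∀ i, Fin (n i) → ℝ, (∀ i x, 0 ≤ w i x) ∧ (∀ i, ∃ x, w i x ≠ 0) ∧
              ∀ a ∈ supp (restrictBy B (0 : Tensor F fun i => Fin (n i))), ∑ i, w i (a i) ≤
                ∑ i, ((∑ x : Fin (n i), w i x) / (Fintype.card (Fin (n i)) : ℝ) -
                  ε * ⨆ x : Fin (n i), w i x)} = ∅ := by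
          rw [Set.eq_empty_iff_forall_notMem]
          rintro ε ⟨hε, B, hB, w, hw0, hwne, hcon⟩
          push_neg at hall
          obtain ⟨i0, hi0⟩ := hall
          obtain ⟨x, hx⟩ := hwne i0
          have := Fin.pos x
          omega
        rw [hset, Real.sSup_empty]
    rw [hrho, hinstab]
    have hA0 : (0:ℝ) ≤ ∑ i, θ i * Real.logb 2 (n i) := by
      refine Finset.sum_nonneg fun i _ => ?_
      refine mul_nonneg (hθ.1 i) ?_
      rcases Nat.eq_zero_or_pos (n i) with h | h
      · simp [h]
      · exact Real.logb_nonneg one_lt_two (by exact_mod_cast h)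
    norm_num
    exact hA0
  · -- main case `t ≠ 0`
    have hα : ∃ α, t α ≠ 0 := by
      by_contra h; push_neg at h; exact ht (funext h)
    haveI hnI : ∀ i, Nonempty (Fin (n i)) := fun i => ⟨hα.choose i⟩
    haveI hnk : Nonempty (Fin k) := by
      by_contra h
      rw [not_nonempty_iff] at h
      have h2 := hθ.2
      rw [Finset.sum_eq_zero (fun i _ => (h.false i).elim)] at h2
      norm_num at h2
    have hcard : ∀ i, (0:ℝ) < (Fintype.card (Fin (n i)) : ℝ) := by
      intro i
      have : 0 < Fintype.card (Fin (n i)) := Fintype.card_pos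
      exact_mod_cast this
    set c : ℝ := 2 / Real.log 2 * ⨅ i, θ i with hc
    set A : ℝ := ∑ i, θ i * Real.logb 2 (n i) with hA
    set S : Set ℝ := {h | ∃ B : ∀ i, Matrix (Fin (n i)) (Fin (n i)) F, IsBasisTuple B ∧
      h = HwSet θ (supp (restrictBy B t))} with hS
    set Ei : Set ℝ := {ε : ℝ | 0 ≤ ε ∧
      ∃ B : ∀ i, Matrix (Fin (n i)) (Fin (n i)) F, IsBasisTuple B ∧
      ∃ w : ∀ i, Fin (n i) → ℝ, (∀ i x, 0 ≤ w i x) ∧ (∀ i, ∃ x, w i x ≠ 0) ∧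
        ∀ a ∈ supp (restrictBy B t), ∑ i, w i (a i) ≤
          ∑ i, ((∑ x : Fin (n i), w i x) / (Fintype.card (Fin (n i)) : ℝ) -
            ε * ⨆ x : Fin (n i), w i x)} with hEi
    have hrhoS : rhoUpper θ t = sInf S := rfl
    have hinstE : instab t = sSup Ei := rfl
    have hSbdd : BddBelow S := by
      refine ⟨0, ?_⟩
      rintro h ⟨B, hB, rfl⟩
      exact st18_HwSet_nonneg θ hθ.1 _
    -- the key estimate
    have key : ∀ ε ∈ Ei, rhoUpper θ t ≤ A - c * ε ^ 2 := by
      rintro ε ⟨hε, B, hB, w, hw0, hwne, hcon⟩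
      have hΦne : ∃ α, restrictBy B t α ≠ 0 := by
        by_contra h; push_neg at h
        exact st18_restrictBy_ne_zero hB ht (funext h)
      obtain ⟨a₀, ha₀⟩ := hΦne
      have hboundP : ∀ P : (∀ i, Fin (n i)) → ℝ, IsProbDist P →
          (∀ α, P α ≠ 0 → α ∈ supp (restrictBy B t)) →
          Hw θ P ≤ A - c * ε ^ 2 := by
        intro P hP hPsupp
        have hcore := st18_core θ hθ (supp (restrictBy B t)) w hw0 hwne ε hε hcon P hP hPsupp
        have hAeq : ∑ i, θ i * Real.logb 2 (Fintype.card (Fin (n i))) = A := by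
          rw [hA]
          exact Finset.sum_congr rfl fun i _ => by rw [Fintype.card_fin]
        rw [hAeq] at hcore
        rw [hc]
        exact hcore
      have hnonneg : 0 ≤ A - c * ε ^ 2 := by
        have hdpd : IsProbDist (fun α : ∀ i, Fin (n i) => if α = a₀ then (1:ℝ) else 0) := by
          constructor
          · intro α; by_cases h : α = a₀ <;> simp [h]
          · rw [Finset.sum_ite_eq' Finset.univ a₀ (fun _ => (1:ℝ))]
            simp
        have hdsupp : ∀ α, (if α = a₀ then (1:ℝ) else 0) ≠ 0 → α ∈ supp (restrictBy B t) := by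
          intro α h
          by_cases hh : α = a₀
          · subst hh; exact ha₀
          · simp [hh] at h
        have hdir := hboundP _ hdpd hdsupp
        rwa [st18_Hw_dirac] at hdir
      have hmemS : HwSet θ (supp (restrictBy B t)) ∈ S := ⟨B, hB, rfl⟩
      have hle : HwSet θ (supp (restrictBy B t)) ≤ A - c * ε ^ 2 := by
        refine Real.sSup_le ?_ hnonneg
        rintro x ⟨P, hP, hs, rfl⟩
        exact hboundP P hP hs
      rw [hrhoS]
      exact le_trans (csInf_le hSbdd hmemS) hle
    -- `0` belongs to the instability set
    have h0mem : (0:ℝ) ∈ Ei := by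
      refine ⟨le_rfl, fun _ => 1, fun i => isUnit_one, fun i _ => 1,
        fun i x => zero_le_one, fun i => ⟨Classical.arbitrary _, one_ne_zero⟩, ?_⟩
      intro a _
      refine le_of_eq (Finset.sum_congr rfl fun i _ => ?_)
      have hne0 : ((n i : ℝ)) ≠ 0 := by
        have h := Fin.pos (Classical.arbitrary (Fin (n i)))
        exact Nat.cast_ne_zero.mpr (by omega)
      simp [Fintype.card_fin, Finset.sum_const, Finset.card_univ, div_self hne0]
    -- the instability set is bounded above (by 1)
    have hEbdd : BddAbove Ei := by
      refine ⟨1, ?_⟩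
      rintro ε ⟨hε, B, hB, w, hw0, hwne, hcon⟩
      have hΦne : ∃ α, restrictBy B t α ≠ 0 := by
        by_contra h; push_neg at h
        exact st18_restrictBy_ne_zero hB ht (funext h)
      obtain ⟨a₀, ha₀⟩ := hΦne
      have hM : ∀ i (x : Fin (n i)), w i x ≤ ⨆ y : Fin (n i), w i y :=
        fun i x => le_ciSup (Set.Finite.bddAbove (Set.finite_range _)) x
      have hMpos : ∀ i, 0 < ⨆ y : Fin (n i), w i y := by
        intro i
        obtain ⟨x, hx⟩ := hwne i
        exact lt_of_lt_of_le (lt_of_le_of_ne (hw0 i x) (Ne.symm hx)) (hM i x)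
      have h1 := hcon a₀ ha₀
      have h2 : (0:ℝ) ≤ ∑ i, w i (a₀ i) := Finset.sum_nonneg fun i _ => hw0 i _
      have h3 : ∑ i, ((∑ x : Fin (n i), w i x) / (Fintype.card (Fin (n i)) : ℝ) -
          ε * ⨆ x : Fin (n i), w i x) ≤
          ∑ i, ((⨆ x : Fin (n i), w i x) - ε * ⨆ x : Fin (n i), w i x) := by
        refine Finset.sum_le_sum fun i _ => ?_
        have h4 : (∑ x : Fin (n i), w i x) ≤
            (Fintype.card (Fin (n i)) : ℝ) * ⨆ x : Fin (n i), w i x := by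
          calc (∑ x : Fin (n i), w i x) ≤
              ∑ _x : Fin (n i), ⨆ y : Fin (n i), w i y :=
                Finset.sum_le_sum fun x _ => hM i x
            _ = (Fintype.card (Fin (n i)) : ℝ) * ⨆ y : Fin (n i), w i y := by
                rw [Finset.sum_const, Finset.card_univ, nsmul_eq_mul]
        have hdiv : (∑ x : Fin (n i), w i x) / (Fintype.card (Fin (n i)) : ℝ) ≤
            ⨆ x : Fin (n i), w i x := by
          rw [div_le_iff₀ (hcard i)]
          linarith [h4]
        linarith [hdiv]
      have h5 : ∑ i, ((⨆ x : Fin (n i), w i x) - ε * ⨆ x : Fin (n i), w i x) =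
          (1 - ε) * ∑ i, ⨆ x : Fin (n i), w i x := by
        rw [Finset.mul_sum]
        exact Finset.sum_congr rfl fun i _ => by ring
      have h6 : 0 < ∑ i, ⨆ x : Fin (n i), w i x :=
        Finset.sum_pos (fun i _ => hMpos i) Finset.univ_nonempty
      rw [h5] at h3
      nlinarith
    have hinst0 : 0 ≤ instab t := by
      rw [hinstE]
      exact le_csSup hEbdd h0mem
    have hM0n : 0 ≤ A - rhoUpper θ t := by
      have h1 := key 0 h0mem
      norm_num at h1
      linarith
    have hc0 : 0 ≤ c := by
      rw [hc]
      exact mul_nonneg (div_nonneg zero_le_two (Real.log_nonneg one_le_two))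
        (Real.iInf_nonneg hθ.1)
    show rhoUpper θ t ≤ A - c * instab t ^ 2
    rcases eq_or_lt_of_le hc0 with hc1 | hc1
    · rw [← hc1, zero_mul, sub_zero]
      linarith
    · have hcle : ∀ ε ∈ Ei, ε ≤ Real.sqrt ((A - rhoUpper θ t) / c) := by
        intro ε hε'
        have h1 := key ε hε'
        have hε0 : 0 ≤ ε := hε'.1
        have h3 : ε ^ 2 ≤ (A - rhoUpper θ t) / c := by
          rw [le_div_iff₀ hc1]
          nlinarith
        calc ε = Real.sqrt (ε ^ 2) := (Real.sqrt_sq hε0).symm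
          _ ≤ _ := Real.sqrt_le_sqrt h3
      have hsup_le : instab t ≤ Real.sqrt ((A - rhoUpper θ t) / c) := by
        rw [hinstE]
        exact csSup_le ⟨0, h0mem⟩ hcle
      have h5 : instab t ^ 2 ≤ (A - rhoUpper θ t) / c := by
        have h6 := pow_le_pow_left₀ hinst0 hsup_le 2
        rwa [Real.sq_sqrt (by positivity)] at h6
      have h7 : c * instab t ^ 2 ≤ A - rhoUpper θ t := by
        calc c * instab t ^ 2 ≤ c * ((A - rhoUpper θ t) / c) :=
              mul_le_mul_of_nonneg_left h5 hc1.le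
          _ = A - rhoUpper θ t := by field_simp
      linarith


end CVZ

end
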